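/- Let Q₁ and Q₂ be finite faithful quandles. If there exists an injective quandle homomorphism f : Q₁ → Q₂, then the order of Inn(Q₁) divides the order of Inn(Q₂). -/

import Mathlib

/-- A quandle structure on a type `Q`. -/
structure QuandleStr (Q : Type*) where
  s : Q → Q → Q
  fix : ∀ x, s x x = x
  bij : ∀ x, Function.Bijective (s x)
  dist : ∀ x y z, s x (s y z) = s (s x y) (s x z)

/-- The symmetry at a point, as a permutation of `Q`. -/
noncomputable def QuandleStr.sym {Q : Type*} (q : QuandleStr Q) (x : Q) : Equiv.Perm Q :=
  Equiv.ofBijective (q.s x) (q.bij x)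

/-- The inner automorphism group of a quandle. -/
noncomputable def QuandleStr.inn {Q : Type*} (q : QuandleStr Q) : Subgroup (Equiv.Perm Q) :=
  Subgroup.closure (Set.range q.sym)

/-- If there is an injective quandle homomorphism between finite faithful quandles
Q₁ and Q₂, then #Inn(Q₁) divides #Inn(Q₂). -/
theorem inn_card_dvd {Q₁ Q₂ : Type*} [Finite Q₁] [Finite Q₂]
    (q₁ : QuandleStr Q₁) (q₂ : QuandleStr Q₂)
    (hfaith₁ : ∀ x y : Q₁, q₁.s x = q₁.s y → x = y)
    (hfaith₂ : ∀ x y : Q₂, q₂.s x = q₂.s y → x = y)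
    (f : Q₁ → Q₂) (hf : Function.Injective f)
    (hhom : ∀ x y : Q₁, f (q₁.s x y) = q₂.s (f x) (f y)) :
    Nat.card q₁.inn ∣ Nat.card q₂.inn := by
  classical
  set S : Set Q₂ := Set.range f with hS
  set H : Subgroup (Equiv.Perm Q₂) :=
    Subgroup.closure (Set.range fun x : Q₁ => q₂.sym (f x)) with hH
  -- every element of H preserves S
  have pres : ∀ g ∈ H, ∀ a : Q₂, a ∈ S ↔ g a ∈ S := by
    intro g hg
    refine Subgroup.closure_induction ?_ ?_ ?_ ?_ hg
    · rintro _ ⟨x, rfl⟩ a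
      constructor
      · rintro ⟨y, rfl⟩
        exact ⟨q₁.s x y, by simp [QuandleStr.sym, hhom]⟩
      · rintro ⟨z, hz⟩
        obtain ⟨y, hy⟩ := (q₁.bij x).2 z
        refine ⟨y, (q₂.sym (f x)).injective ?_⟩
        have h1 : (q₂.sym (f x)) (f y) = f z := by
          simp [QuandleStr.sym, ← hhom, hy]
        rw [h1, hz]
    · intro a; rfl
    · intro g h _ _ hg' hh' a
      simpa [Equiv.Perm.mul_apply] using (hh' a).trans (hg' (h a))
    · intro g _ hg' a
      have := (hg' (g⁻¹ a))
      simpa using this.symm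
  let eS : Q₁ ≃ S := Equiv.ofInjective f hf
  -- the restriction homomorphism
  let φ : H →* Equiv.Perm Q₁ :=
    { toFun := fun g => eS.symm.permCongr ((g : Equiv.Perm Q₂).subtypePerm (fun a => (pres g g.2 a).symm))
      map_one' := by
        ext x
        simp [Equiv.Perm.subtypePerm, Equiv.permCongr]
      map_mul' := by
        intro g h
        ext x
        simp [Equiv.Perm.subtypePerm, Equiv.permCongr, Equiv.Perm.mul_apply] }
  have key : ∀ y : S, f (eS.symm y) = (y : Q₂) := fun y =>
    Equiv.apply_ofInjective_symm hf y
  have hφ : ∀ (g : H) (x : Q₁), f (φ g x) = (g : Equiv.Perm Q₂) (f x) := by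
    intro g x
    show f (eS.symm _) = _
    rw [key]
    show (g : Equiv.Perm Q₂) ↑(eS x) = _
    exact congrArg _ ((key (eS x)).symm.trans (congrArg f (eS.symm_apply_apply x)))
  have hgen : ∀ x : Q₁,
      φ ⟨q₂.sym (f x), Subgroup.subset_closure ⟨x, rfl⟩⟩ = q₁.sym x := by
    intro x
    ext y
    apply hf
    rw [hφ]
    simp [QuandleStr.sym, hhom]
  have h1 : q₁.inn ≤ φ.range := by
    rw [QuandleStr.inn, Subgroup.closure_le]
    rintro _ ⟨x, rfl⟩
    exact ⟨⟨q₂.sym (f x), Subgroup.subset_closure ⟨x, rfl⟩⟩, hgen x⟩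
  have h2 : H ≤ q₂.inn := by
    rw [hH, QuandleStr.inn, Subgroup.closure_le]
    rintro _ ⟨x, rfl⟩
    exact Subgroup.subset_closure ⟨f x, rfl⟩
  calc Nat.card q₁.inn ∣ Nat.card φ.range := Subgroup.card_dvd_of_le h1
    _ ∣ Nat.card H := Subgroup.card_dvd_of_surjective φ.rangeRestrict φ.rangeRestrict_surjective
    _ ∣ Nat.card q₂.inn := Subgroup.card_dvd_of_le h2
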